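/- For a finite set A of atoms within a finite vocabulary V, the program Π_A = { ¬(⋁_{b ∈ V∖A} b) → a : a ∈ A } has a unique equilibrium model over V, namely ⟨A,A⟩. -/
import Mathlib


/-- Propositional formulas over atoms ℕ. -/
inductive Fm where
  | atom : ℕ → Fm
  | bot  : Fm
  | and  : Fm → Fm → Fm
  | or   : Fm → Fm → Fm
  | imp  : Fm → Fm → Fm
deriving DecidableEq

def Fm.neg (φ : Fm) : Fm := Fm.imp φ Fm.bot
def Fm.top : Fm := Fm.imp Fm.bot Fm.bot

/-- Truth at the "there" world (classical truth in T). -/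
def satT (T : Set ℕ) : Fm → Prop
  | .atom a  => a ∈ T
  | .bot     => False
  | .and φ ψ => satT T φ ∧ satT T ψ
  | .or φ ψ  => satT T φ ∨ satT T ψ
  | .imp φ ψ => satT T φ → satT T ψ

/-- Truth at the "here" world of the HT-interpretation ⟨H,T⟩. -/
def satH (H T : Set ℕ) : Fm → Prop
  | .atom a  => a ∈ H
  | .bot     => False
  | .and φ ψ => satH H T φ ∧ satH H T ψ
  | .or φ ψ  => satH H T φ ∨ satH H T ψ
  | .imp φ ψ => (satH H T φ → satH H T ψ) ∧ (satT T φ → satT T ψ)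

/-- ⟨H,T⟩ is an HT-model of φ (true at both worlds). -/
def htSat (H T : Set ℕ) (φ : Fm) : Prop := satH H T φ ∧ satT T φ

/-- ⟨H,T⟩ is an HT-model of the theory Γ. -/
def htSatTh (H T : Set ℕ) (Γ : Set Fm) : Prop := ∀ φ ∈ Γ, htSat H T φ

/-- Atoms occurring in a formula. -/
def vars : Fm → Finset ℕ
  | .atom a  => {a}
  | .bot     => ∅
  | .and φ ψ => vars φ ∪ vars ψ
  | .or φ ψ  => vars φ ∪ vars ψ
  | .imp φ ψ => vars φ ∪ vars ψ

/-- Atoms occurring in a theory. -/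
def varsTh (Γ : Set Fm) : Set ℕ := ⋃ φ ∈ Γ, (vars φ : Set ℕ)

/-- HT-consequence: every world of every HT-interpretation making all of Γ true makes φ true. -/
def htConseqTh (Γ : Set Fm) (φ : Fm) : Prop :=
  ∀ H T : Set ℕ, H ⊆ T →
    ((∀ ψ ∈ Γ, satH H T ψ) → satH H T φ) ∧ ((∀ ψ ∈ Γ, satT T ψ) → satT T φ)

/-- ⟨T,T⟩ is an equilibrium model of Γ over vocabulary V. -/
def eqModel (V : Set ℕ) (Γ : Set Fm) (T : Set ℕ) : Prop :=
  T ⊆ V ∧ htSatTh T T Γ ∧ ∀ H : Set ℕ, H ⊆ T → H ≠ T → ¬ htSatTh H T Γ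

def bigAnd (l : List Fm) : Fm := l.foldr Fm.and Fm.top
def bigOr (l : List Fm) : Fm := l.foldr Fm.or Fm.bot
noncomputable def conjAtoms (s : Finset ℕ) : Fm := bigAnd (s.toList.map Fm.atom)
noncomputable def disjAtoms (s : Finset ℕ) : Fm := bigOr (s.toList.map Fm.atom)
/-- δ_T over vocabulary V : (⋀_{a∈T} a) ∧ ¬(⋁_{a∈V∖T} a). -/
noncomputable def delta (V T : Finset ℕ) : Fm := Fm.and (conjAtoms T) (Fm.neg (disjAtoms (V \ T)))


lemma satT_bigOr (T : Set ℕ) (l : List Fm) : satT T (bigOr l) ↔ ∃ φ ∈ l, satT T φ := by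
  induction l with
  | nil => simp [bigOr, satT]
  | cons h t ih =>
      show satT T h ∨ satT T (bigOr t) ↔ _
      rw [ih]; simp

lemma satH_bigOr (H T : Set ℕ) (l : List Fm) : satH H T (bigOr l) ↔ ∃ φ ∈ l, satH H T φ := by
  induction l with
  | nil => simp [bigOr, satH]
  | cons h t ih =>
      show satH H T h ∨ satH H T (bigOr t) ↔ _
      rw [ih]; simp

lemma satT_disj (T : Set ℕ) (s : Finset ℕ) : satT T (disjAtoms s) ↔ ∃ a ∈ s, a ∈ T := by
  simp [disjAtoms, satT_bigOr, satT]

lemma satH_disj (H T : Set ℕ) (s : Finset ℕ) : satH H T (disjAtoms s) ↔ ∃ a ∈ s, a ∈ H := by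
  simp [disjAtoms, satH_bigOr, satH]

/-- the program Π_A = { ¬(⋁_{b ∈ V∖A} b) → a : a ∈ A } has ⟨A,A⟩
as its unique equilibrium model over V. -/
theorem piA_unique_eq_model (V A : Finset ℕ) (hAV : A ⊆ V) :
    ∀ T : Set ℕ,
      eqModel (V : Set ℕ)
        {φ : Fm | ∃ a ∈ A, φ = Fm.imp (Fm.neg (disjAtoms (V \ A))) (Fm.atom a)} T
      ↔ T = (A : Set ℕ) := by
  intro T
  set D := disjAtoms (V \ A) with hD
  set Γ : Set Fm := {φ : Fm | ∃ a ∈ A, φ = Fm.imp (Fm.neg D) (Fm.atom a)} with hΓ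
  constructor
  · rintro ⟨hTV, hsat, hmin⟩
    -- first show T ∩ (V \ A) = ∅, i.e. T ⊆ A
    have hTA : T ⊆ (A : Set ℕ) := by
      intro x hxT
      by_contra hxA
      -- then satT T D holds
      have hDT : satT T D := by
        rw [hD, satT_disj]
        exact ⟨x, Finset.mem_sdiff.mpr ⟨hTV hxT, hxA⟩, hxT⟩
      -- so ∅ satisfies the program
      have hE : htSatTh ∅ T Γ := by
        rintro φ ⟨a, ha, rfl⟩
        refine ⟨⟨fun h => absurd hDT h.2, fun h => absurd hDT h⟩,
                fun h => absurd hDT h⟩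
      have hne : (∅ : Set ℕ) ≠ T := by
        intro h; rw [← h] at hxT; exact hxT
      exact hmin ∅ (Set.empty_subset T) hne hE
    have hnDT : ¬ satT T D := by
      rw [hD, satT_disj]
      rintro ⟨b, hb, hbT⟩
      exact (Finset.mem_sdiff.mp hb).2 (hTA hbT)
    have hAT : (A : Set ℕ) ⊆ T := by
      intro a haA
      have := (hsat (Fm.imp (Fm.neg D) (Fm.atom a)) ⟨a, haA, rfl⟩).2
      exact this (fun h => absurd h hnDT)
    exact Set.Subset.antisymm hTA hAT
  · rintro rfl
    have hnDT : ¬ satT (A : Set ℕ) D := by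
      rw [hD, satT_disj]
      rintro ⟨b, hb, hbT⟩
      exact (Finset.mem_sdiff.mp hb).2 hbT
    refine ⟨by exact_mod_cast Finset.coe_subset.mpr hAV, ?_, ?_⟩
    · rintro φ ⟨a, ha, rfl⟩
      exact ⟨⟨fun _ => ha, fun _ => ha⟩, fun _ => ha⟩
    · intro H hHA hne hsat
      apply hne
      apply Set.Subset.antisymm hHA
      intro a haA
      have hnDH : ¬ satH H (A : Set ℕ) D := by
        rw [hD, satH_disj]
        rintro ⟨b, hb, hbH⟩
        exact (Finset.mem_sdiff.mp hb).2 (hHA hbH)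
      have := (hsat (Fm.imp (Fm.neg D) (Fm.atom a)) ⟨a, haA, rfl⟩).1.1
      exact this ⟨fun h => absurd h hnDH, fun h => absurd h hnDT⟩
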